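/- Let α = [0; a₁, a₂, …] ∈ (0,1) be irrational with convergents pₙ/qₙ and θₙ = qₙα − pₙ. Let (sᵢ), (tᵢ) be sequences of natural numbers with sᵢ < tᵢ, s_{i+1} = tᵢ + 2 for all i, and |tᵢ − sᵢ| → ∞, and let β = Σ_{i=1}^∞ θ_{tᵢ+1} viewed as an element of 𝕋. Then β ∈ t^s_{(qₙ)}(𝕋), i.e., qₙβ → 0 statistically in 𝕋. -/

import Mathlib

open Filter Topology

noncomputable section

/-- The circle group `𝕋 = ℝ/ℤ`. -/
abbrev Circle1 : Type := AddCircle (1 : ℝ)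

/-- A set of naturals has natural density zero. -/
def DensityZero (A : Set ℕ) : Prop :=
  Tendsto (fun n : ℕ => ((A ∩ Set.Icc 1 n).ncard : ℝ) / n) atTop (𝓝 0)

/-- Statistical convergence to `0` of a sequence in the circle. -/
def StatTendstoZero (x : ℕ → Circle1) : Prop :=
  ∀ ε : ℝ, 0 < ε → DensityZero {n : ℕ | ε ≤ ‖x n‖}

/-- The characterized subgroup `t_(a_n)(𝕋)`. -/
def charSet (a : ℕ → ℤ) : Set Circle1 :=
  {x : Circle1 | Tendsto (fun n : ℕ => a n • x) atTop (𝓝 0)}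

/-- The statistically characterized subgroup `t^s_(a_n)(𝕋)`. -/
def statCharSet (a : ℕ → ℤ) : Set Circle1 :=
  {x : Circle1 | StatTendstoZero (fun n : ℕ => a n • x)}

namespace CF

/-- Gauss-map orbit of `α`: `G α 0 = α`, `G α (n+1) = {1 / G α n}`. -/
def G (α : ℝ) : ℕ → ℝ
  | 0 => α
  | n + 1 => Int.fract (G α n)⁻¹

/-- The partial quotients of the regular continued fraction `α = [0; a 1, a 2, …]`
(with the convention `a 0 = 0`). -/
def a (α : ℝ) : ℕ → ℕ
  | 0 => 0
  | n + 1 => ⌊(G α n)⁻¹⌋₊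

/-- Denominators of the convergents of the continued fraction of `α`. -/
def q (α : ℝ) : ℕ → ℕ
  | 0 => 1
  | 1 => a α 1
  | (n + 2) => a α (n + 2) * q α (n + 1) + q α n

/-- Numerators of the convergents of the continued fraction of `α`. -/
def p (α : ℝ) : ℕ → ℕ
  | 0 => 0
  | 1 => 1
  | (n + 2) => a α (n + 2) * p α (n + 1) + p α n

/-- `θ n = q n * α - p n`. -/
def θ (α : ℝ) (n : ℕ) : ℝ := (q α n : ℝ) * α - (p α n : ℝ)

end CF

open CF

namespace CF
variable {α : ℝ}

lemma G_aux (hα : α ∈ Set.Ioo (0:ℝ) 1) (hirr : Irrational α) (n : ℕ) :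
    G α n ∈ Set.Ioo (0:ℝ) 1 ∧ Irrational (G α n) := by
  induction n with
  | zero => exact ⟨hα, hirr⟩
  | succ n ih =>
    obtain ⟨⟨h0, h1⟩, hi⟩ := ih
    have hfr : Irrational (Int.fract (G α n)⁻¹) := by
      rw [Int.fract]
      exact hi.inv.sub_intCast _
    have h0' : (0:ℝ) < Int.fract (G α n)⁻¹ :=
      lt_of_le_of_ne (Int.fract_nonneg _) (Ne.symm hfr.ne_zero)
    exact ⟨⟨by simpa [G] using h0', by simpa [G] using Int.fract_lt_one (G α n)⁻¹⟩,
      by simpa [G] using hfr⟩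

lemma one_lt_inv_G (hα : α ∈ Set.Ioo (0:ℝ) 1) (hirr : Irrational α) (n : ℕ) :
    1 < (G α n)⁻¹ := by
  obtain ⟨⟨h0, h1⟩, _⟩ := G_aux hα hirr n
  exact (one_lt_inv₀ h0).mpr h1

lemma a_succ_cast (hα : α ∈ Set.Ioo (0:ℝ) 1) (hirr : Irrational α) (n : ℕ) :
    (a α (n+1) : ℝ) = (G α n)⁻¹ - G α (n+1) := by
  have h1 := one_lt_inv_G hα hirr n
  have : ((⌊(G α n)⁻¹⌋₊ : ℝ)) = (⌊(G α n)⁻¹⌋ : ℝ) := by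
    exact_mod_cast congrArg (Int.cast (R := ℝ)) (Int.natCast_floor_eq_floor (le_of_lt (lt_trans one_pos h1)))
  show ((⌊(G α n)⁻¹⌋₊ : ℕ) : ℝ) = (G α n)⁻¹ - Int.fract (G α n)⁻¹
  rw [this, Int.fract]
  ring

lemma a_succ_pos (hα : α ∈ Set.Ioo (0:ℝ) 1) (hirr : Irrational α) (n : ℕ) :
    1 ≤ a α (n+1) := by
  show 1 ≤ ⌊(G α n)⁻¹⌋₊
  exact Nat.le_floor (by exact_mod_cast (one_lt_inv_G hα hirr n).le)



lemma theta_rec (n : ℕ) : θ α (n+2) = (a α (n+2) : ℝ) * θ α (n+1) + θ α n := by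
  unfold θ
  show (q α (n+2) : ℝ) * α - (p α (n+2) : ℝ) = _
  rw [show q α (n+2) = a α (n+2) * q α (n+1) + q α n from rfl,
      show p α (n+2) = a α (n+2) * p α (n+1) + p α n from rfl]
  push_cast
  ring

lemma theta_zero : θ α 0 = α := by
  unfold θ
  norm_num [q, p]

lemma theta_one : θ α 1 = (a α 1 : ℝ) * α - 1 := by
  unfold θ
  norm_num [q, p]

lemma theta_prod (hα : α ∈ Set.Ioo (0:ℝ) 1) (hirr : Irrational α) (n : ℕ) :
    θ α n = (-1)^n * ∏ k ∈ Finset.range (n+1), G α k := by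
  induction n using Nat.twoStepInduction with
  | zero =>
    simp [theta_zero, Finset.prod_range_one]
    rfl
  | one =>
    rw [theta_one, a_succ_cast hα hirr 0]
    have h0 : G α 0 = α := rfl
    have hne : α ≠ 0 := ne_of_gt hα.1
    rw [Finset.prod_range_succ, Finset.prod_range_one, h0]
    field_simp
    ring
  | more n ih1 ih2 =>
    rw [theta_rec, ih1, ih2, a_succ_cast hα hirr (n+1)]
    have hne : G α (n+1) ≠ 0 := ne_of_gt (G_aux hα hirr (n+1)).1.1
    rw [Finset.prod_range_succ (n := n+2), Finset.prod_range_succ (n := n+1)]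
    field_simp
    ring

lemma prod_G_pos (hα : α ∈ Set.Ioo (0:ℝ) 1) (hirr : Irrational α) (n : ℕ) :
    0 < ∏ k ∈ Finset.range (n+1), G α k :=
  Finset.prod_pos fun k _ => (G_aux hα hirr k).1.1

lemma theta_abs (hα : α ∈ Set.Ioo (0:ℝ) 1) (hirr : Irrational α) (n : ℕ) :
    |θ α n| = ∏ k ∈ Finset.range (n+1), G α k := by
  rw [theta_prod hα hirr n, abs_mul, abs_pow, abs_neg, abs_one, one_pow, one_mul,
    abs_of_pos (prod_G_pos hα hirr n)]



lemma q_pos (hα : α ∈ Set.Ioo (0:ℝ) 1) (hirr : Irrational α) (n : ℕ) :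
    1 ≤ q α n := by
  induction n using Nat.twoStepInduction with
  | zero => exact le_refl 1
  | one => exact a_succ_pos hα hirr 0
  | more n ih1 ih2 =>
    show 1 ≤ a α (n+2) * q α (n+1) + q α n
    omega

lemma q_succ_le (hα : α ∈ Set.Ioo (0:ℝ) 1) (hirr : Irrational α) (n : ℕ) :
    q α n ≤ q α (n+1) := by
  cases n with
  | zero => exact q_pos hα hirr 1
  | succ n =>
    show q α (n+1) ≤ a α (n+2) * q α (n+1) + q α n
    have := a_succ_pos hα hirr (n+1)
    nlinarith [q_pos hα hirr n, q_pos hα hirr (n+1)]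

lemma q_mono (hα : α ∈ Set.Ioo (0:ℝ) 1) (hirr : Irrational α) : Monotone (q α) :=
  monotone_nat_of_le_succ (q_succ_le hα hirr)

lemma q_double (hα : α ∈ Set.Ioo (0:ℝ) 1) (hirr : Irrational α) (n : ℕ) :
    2 * q α n ≤ q α (n+2) := by
  show 2 * q α n ≤ a α (n+2) * q α (n+1) + q α n
  have h1 := a_succ_pos hα hirr (n+1)
  have h2 : q α n ≤ q α (n+1) := q_succ_le hα hirr n
  nlinarith [q_pos hα hirr (n+1)]

lemma q_growth (hα : α ∈ Set.Ioo (0:ℝ) 1) (hirr : Irrational α) (n k : ℕ) :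
    2^k * q α n ≤ q α (n + 2*k) := by
  induction k with
  | zero => simpa using le_refl (q α n)
  | succ k ih =>
    have h2 : 2 * q α (n + 2*k) ≤ q α (n + 2*k + 2) := q_double hα hirr (n + 2*k)
    have : n + 2*(k+1) = n + 2*k + 2 := by ring
    rw [this, pow_succ]
    calc 2^k * 2 * q α n = 2 * (2^k * q α n) := by ring
    _ ≤ 2 * q α (n + 2*k) := by omega
    _ ≤ q α (n + 2*k + 2) := h2

lemma q_growth' (hα : α ∈ Set.Ioo (0:ℝ) 1) (hirr : Irrational α) {n k m : ℕ}
    (h : n + 2*k ≤ m) : 2^k * q α n ≤ q α m :=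
  le_trans (q_growth hα hirr n k) (q_mono hα hirr h)

lemma det (n : ℕ) : (p α (n+1) : ℤ) * q α n - (p α n : ℤ) * q α (n+1) = (-1)^n := by
  induction n with
  | zero => norm_num [q, p]
  | succ n ih =>
    rw [show q α (n+2) = a α (n+2) * q α (n+1) + q α n from rfl,
        show p α (n+2) = a α (n+2) * p α (n+1) + p α n from rfl]
    push_cast
    push_cast at ih
    rw [pow_succ]
    nlinarith [ih]

lemma theta_q_identity (n : ℕ) :
    θ α n * (q α (n+1) : ℝ) - θ α (n+1) * (q α n : ℝ) = (-1)^n := by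
  have h := det (α := α) n
  have h' : ((p α (n+1) : ℝ)) * q α n - (p α n : ℝ) * q α (n+1) = (-1)^n := by
    exact_mod_cast congrArg (Int.cast (R := ℝ)) h
  unfold θ
  nlinarith [h']

lemma theta_abs_q_le (hα : α ∈ Set.Ioo (0:ℝ) 1) (hirr : Irrational α) (n : ℕ) :
    (q α (n+1) : ℝ) * |θ α n| ≤ 1 := by
  have hid := theta_q_identity (α := α) n
  rw [theta_prod hα hirr n, theta_prod hα hirr (n+1)] at hid
  have hP1 := prod_G_pos hα hirr n
  have hP2 := prod_G_pos hα hirr (n+1)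
  have hq : (0:ℝ) ≤ (q α n : ℝ) := Nat.cast_nonneg _
  rw [theta_abs hα hirr n]
  rcases Nat.even_or_odd n with he | ho
  · rw [he.neg_one_pow] at hid
    rw [Even.add_one he |>.neg_one_pow] at hid
    nlinarith
  · rw [ho.neg_one_pow] at hid
    rw [Odd.add_one ho |>.neg_one_pow] at hid
    nlinarith

lemma cross (m n : ℕ) : ∃ z : ℤ, (q α n : ℝ) * θ α m = (z : ℝ) + (q α m : ℝ) * θ α n := by
  refine ⟨(q α m : ℤ) * p α n - (q α n : ℤ) * p α m, ?_⟩
  unfold θ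
  push_cast
  ring



lemma term_bound (hα : α ∈ Set.Ioo (0:ℝ) 1) (hirr : Irrational α) {c n m : ℕ}
    (h : 2^c * q α n ≤ q α (m+1)) :
    (q α n : ℝ) * |θ α m| ≤ (2:ℝ)⁻¹^c := by
  have h1 : (0:ℝ) ≤ |θ α m| := abs_nonneg _
  have h2 := theta_abs_q_le hα hirr m
  have h3 : ((2:ℝ))^c * ((q α n : ℝ) * |θ α m|) ≤ (q α (m+1) : ℝ) * |θ α m| := by
    have hc : ((2^c * q α n : ℕ) : ℝ) ≤ ((q α (m+1) : ℕ) : ℝ) := Nat.cast_le.mpr h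
    push_cast at hc
    nlinarith
  have h4 : ((2:ℝ))^c * ((q α n : ℝ) * |θ α m|) ≤ 1 := le_trans h3 h2
  have h5 : (0:ℝ) < (2:ℝ)^c := by positivity
  rw [inv_pow, ← one_div, le_div_iff₀ h5]
  linarith

lemma theta_abs_le_one (hα : α ∈ Set.Ioo (0:ℝ) 1) (hirr : Irrational α) (m : ℕ) :
    |θ α m| ≤ 1 := by
  have := term_bound hα hirr (c := 0) (n := 0) (m := m)
    (by simpa [q] using q_pos hα hirr (m+1))
  simpa [q] using this


end CF

lemma densityZero_mono {A B : Set ℕ} (h : A ⊆ B) (hB : DensityZero B) : DensityZero A := by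
  apply squeeze_zero (fun n => by positivity) (fun n => ?_) hB
  have hfin : (B ∩ Set.Icc 1 n).Finite := (Set.finite_Icc 1 n).subset Set.inter_subset_right
  have hcard : (A ∩ Set.Icc 1 n).ncard ≤ (B ∩ Set.Icc 1 n).ncard :=
    Set.ncard_le_ncard (Set.inter_subset_inter_left _ h) hfin
  rcases Nat.eq_zero_or_pos n with rfl | hn
  · simp
  · apply div_le_div_of_nonneg_right ?_ ?_ |>.trans_eq rfl
    all_goals first
    | exact_mod_cast hcard
    | positivity

lemma densityZero_sparse (M : ℕ → ℕ) (hmono : StrictMono M)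
    (hgap : Tendsto (fun i => M (i+1) - M i) atTop atTop) (K : ℕ) :
    DensityZero {n : ℕ | ∃ i, n < M i + K ∧ M i < n + K} := by
  set Bad := {n : ℕ | ∃ i, n < M i + K ∧ M i < n + K} with hBad
  rw [DensityZero, NormedAddCommGroup.tendsto_nhds_zero]
  intro δ hδ
  set C : ℕ := 2*K + 1 with hC
  have hCpos : (0:ℝ) < C := by positivity
  obtain ⟨L, hL⟩ := exists_nat_gt ((4*C : ℝ)/δ)
  have hLpos : 0 < L := by
    by_contra hc
    push_neg at hc
    interval_cases L
    · have : (0:ℝ) < 4*C/δ := by positivity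
      simp at hL
      linarith
  have hCL : 4*(C:ℝ) < δ*L := by
    rw [div_lt_iff₀ hδ] at hL
    nlinarith
  obtain ⟨i0, hi0⟩ := eventually_atTop.mp (hgap.eventually (eventually_ge_atTop L))
  have hMlb : ∀ j, j * L ≤ M (i0 + j) := by
    intro j
    induction j with
    | zero => simp
    | succ j ih =>
      have h1 : L ≤ M (i0 + j + 1) - M (i0 + j) := hi0 (i0 + j) (by omega)
      have h2 : M (i0 + j) ≤ M (i0 + j + 1) := (hmono (by omega : i0 + j < i0 + j + 1)).le
      have h3 : M (i0 + j) + L ≤ M (i0 + j + 1) := by omega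
      have : i0 + (j+1) = i0 + j + 1 := by omega
      rw [this]
      calc (j+1) * L = j * L + L := by ring
        _ ≤ M (i0 + j) + L := by omega
        _ ≤ M (i0 + j + 1) := h3
  obtain ⟨N1, hN1⟩ := exists_nat_gt ((2*C*(i0+1) : ℝ)/δ)
  filter_upwards [eventually_ge_atTop N1, eventually_ge_atTop (K+1)] with N hNN1 hNK
  have hN0 : (0:ℝ) < N := by
    have : 1 ≤ N := by omega
    exact_mod_cast Nat.lt_of_lt_of_le Nat.zero_lt_one this
  set d : ℕ := (N + K) / L with hd
  set J : ℕ := i0 + d + 1 with hJ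
  -- every witness index is < J
  have hJbound : ∀ i, M i < N + K → i < J := by
    intro i hi
    by_contra hc
    push_neg at hc
    have h1 : M J ≤ M i := hmono.monotone hc
    have h2 : (d + 1) * L ≤ M (i0 + (d+1)) := hMlb (d + 1)
    have h3 : i0 + (d+1) = J := by omega
    have h4 : N + K < (d + 1) * L := by
      have h5 := Nat.div_add_mod (N + K) L
      have h6 : (N + K) % L < L := Nat.mod_lt _ hLpos
      have : (d + 1) * L = L * ((N+K)/L) + L := by rw [hd]; ring
      omega
    rw [h3] at h2
    omega
  -- counting
  have hsub : Bad ∩ Set.Icc 1 N ⊆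
      ↑((Finset.range J).biUnion (fun i => Finset.Icc (M i - K) (M i + K))) := by
    rintro n ⟨⟨i, h1, h2⟩, hn1, hnN⟩
    simp only [Finset.coe_biUnion, Finset.coe_Icc, Set.mem_iUnion, Set.mem_Icc,
      Finset.mem_coe, Finset.mem_range]
    exact ⟨i, hJbound i (by omega), by omega, by omega⟩
  have hcount : (Bad ∩ Set.Icc 1 N).ncard ≤ J * C := by
    calc (Bad ∩ Set.Icc 1 N).ncard
        ≤ ((Finset.range J).biUnion (fun i => Finset.Icc (M i - K) (M i + K)) : Finset ℕ).card := by
          rw [← Set.ncard_coe_finset]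
          exact Set.ncard_le_ncard hsub (Finset.finite_toSet _)
      _ ≤ ∑ i ∈ Finset.range J, (Finset.Icc (M i - K) (M i + K)).card :=
          Finset.card_biUnion_le
      _ ≤ ∑ i ∈ Finset.range J, C := by
          apply Finset.sum_le_sum
          intro i _
          rw [Nat.card_Icc]
          omega
      _ = J * C := by rw [Finset.sum_const, Finset.card_range, smul_eq_mul]
  -- real arithmetic
  rw [Real.norm_eq_abs, abs_of_nonneg (by positivity)]
  rw [div_lt_iff₀ hN0]
  have hdL : (d:ℝ) * L ≤ N + K := by exact_mod_cast Nat.div_mul_le_self (N+K) L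
  have hKN : (K:ℝ) ≤ N := by exact_mod_cast (by omega : K ≤ N)
  have hN1' : 2*(C:ℝ)*(i0+1) < δ*N := by
    rw [div_lt_iff₀ hδ] at hN1
    have : (N1:ℝ) ≤ N := by exact_mod_cast hNN1
    nlinarith
  have hcount' := (Nat.cast_le (α := ℝ)).mpr hcount
  rw [Nat.cast_mul] at hcount'
  have hJC : (J:ℝ) * C < δ * N := by
    have hd0 : (0:ℝ) ≤ d := Nat.cast_nonneg d
    have e1 : 4*(C:ℝ)*d ≤ δ*(d*L) := by nlinarith
    have e2 : δ*((d:ℝ)*L) ≤ δ*(N+K) := by nlinarith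
    have e3 : δ*((N:ℝ)+K) ≤ 2*δ*N := by nlinarith
    have hJcast : (J:ℝ) = i0 + d + 1 := by rw [hJ]; push_cast; ring
    nlinarith
  linarith

lemma norm_circle_coe_le (x : ℝ) : ‖(x : Circle1)‖ ≤ |x| := by
  rw [AddCircle.norm_eq]
  simpa using round_le x 0

lemma int_coe_circle_zero (z : ℤ) : ((z : ℝ) : Circle1) = 0 := by
  rw [AddCircle.coe_eq_zero_iff]
  exact ⟨z, by simp⟩

set_option maxHeartbeats 2000000 in
/-- **Proposition 2.3.** An element supported off a member of `𝕀`, with digits `1`,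
belongs to `t^s_(qₙ)(𝕋)`. -/
theorem stmt_4 (α : ℝ) (hα : α ∈ Set.Ioo (0 : ℝ) 1) (hirr : Irrational α)
    (s t : ℕ → ℕ) (hst : ∀ i, s i < t i) (hcons : ∀ i, s (i + 1) = t i + 2)
    (hgap : Tendsto (fun i => t i - s i) atTop atTop)
    (β : ℝ) (hβ : β = ∑' i : ℕ, θ α (t i + 1)) :
    (↑β : Circle1) ∈ statCharSet (fun n => (q α n : ℤ)) := by
  set M : ℕ → ℕ := fun i => t i + 1 with hMdef
  have hβ' : β = ∑' i : ℕ, θ α (M i) := hβ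
  have hM3 : ∀ i, M i + 3 ≤ M (i+1) := by
    intro i
    have h1 := hst (i+1)
    have h2 := hcons i
    simp only [hMdef]
    omega
  have hMmono : StrictMono M := strictMono_nat_of_lt_succ (fun i => by have := hM3 i; omega)
  have hMlb : ∀ i, 2*i + 2 ≤ M i := by
    intro i
    induction i with
    | zero => have := hst 0; simp only [hMdef]; omega
    | succ i ih => have := hM3 i; omega
  have hMgrow : ∀ i d, M i + 2*d ≤ M (i + d) := by
    intro i d
    induction d with
    | zero => simp
    | succ d ih =>
      have := hM3 (i + d)
      have he : i + (d+1) = (i + d) + 1 := by omega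
      rw [he]
      omega
  have hq0 : q α 0 = 1 := rfl
  have habs : ∀ i, |θ α (M i)| ≤ (2:ℝ)⁻¹ ^ (i+1) := by
    intro i
    have hgrow : 2^(i+1) * q α 0 ≤ q α (M i + 1) := by
      apply q_growth' hα hirr
      have := hMlb i
      omega
    have := term_bound hα hirr hgrow
    rw [hq0] at this
    simpa using this
  have habs' : Summable (fun i => |θ α (M i)|) := by
    apply Summable.of_nonneg_of_le (fun i => abs_nonneg _) habs
    have hg : Summable (fun i : ℕ => ((1:ℝ)/2) ^ (i+1)) :=
      (summable_nat_add_iff 1).mpr summable_geometric_two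
    simpa [one_div] using hg
  have hsum : Summable (fun i => θ α (M i)) := Summable.of_abs habs'
  show StatTendstoZero _
  intro ε hε
  obtain ⟨k, hk⟩ : ∃ k : ℕ, 8 * (2:ℝ)⁻¹ ^ k < ε := by
    have h2 : Tendsto (fun k : ℕ => 8 * (2:ℝ)⁻¹ ^ k) atTop (𝓝 0) := by
      simpa using
        (tendsto_pow_atTop_nhds_zero_of_lt_one (by norm_num : (0:ℝ) ≤ 2⁻¹)
          (by norm_num)).const_mul (8:ℝ)
    exact (h2.eventually (gt_mem_nhds hε)).exists
  set K := 2*k + 2 with hKdef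
  have key : ∀ n : ℕ, (∀ i, M i + K ≤ n ∨ n + K ≤ M i) →
      ‖((q α n : ℤ) • (↑β : Circle1))‖ < ε := by
    intro n hsep
    have hex : ∃ i, n ≤ M i := ⟨n, by have := hMlb n; omega⟩
    obtain ⟨I, hInle, hIlt⟩ : ∃ I, n ≤ M I ∧ ∀ i, i < I → M i < n :=
      ⟨Nat.find hex, Nat.find_spec hex, fun i hi => not_le.mp (Nat.find_min hex hi)⟩
    have hsepR : n + K ≤ M I := by
      rcases hsep I with h | h
      · omega
      · exact h
    have hsepL : ∀ i, i < I → M i + K ≤ n := by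
      intro i hi
      rcases hsep i with h | h
      · exact h
      · have := hIlt i hi; omega
    -- decomposition of q_n β
    have hqβ : (q α n : ℝ) * β = (∑ i ∈ Finset.range I, (q α n : ℝ) * θ α (M i))
        + ∑' i, (q α n : ℝ) * θ α (M (i + I)) := by
      rw [hβ', ← tsum_mul_left]
      exact (Summable.sum_add_tsum_nat_add I (hsum.mul_left _)).symm
    choose z hz using fun i : ℕ => cross (α := α) (M i) n
    set R : ℝ := (∑ i ∈ Finset.range I, (q α (M i) : ℝ) * θ α n)
        + ∑' i, (q α n : ℝ) * θ α (M (i + I)) with hR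
    have hZR : (q α n : ℝ) * β = ((∑ i ∈ Finset.range I, z i : ℤ) : ℝ) + R := by
      rw [hqβ, hR, Finset.sum_congr rfl (fun i _ => hz i), Finset.sum_add_distrib]
      push_cast
      ring
    have hcirc : ((q α n : ℤ) • (↑β : Circle1)) = ((R : ℝ) : Circle1) := by
      have h1 : ((q α n : ℤ) • (↑β : Circle1)) = (((q α n : ℝ) * β : ℝ) : Circle1) := by
        rw [← AddCircle.coe_zsmul]
        norm_cast
        push_cast
        ring_nf
      rw [h1, hZR, AddCircle.coe_add, int_coe_circle_zero, zero_add]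
    -- head bound
    have hheadb : |∑ i ∈ Finset.range I, (q α (M i) : ℝ) * θ α n| ≤ 2 * (2:ℝ)⁻¹^k := by
      calc |∑ i ∈ Finset.range I, (q α (M i) : ℝ) * θ α n|
          ≤ ∑ i ∈ Finset.range I, |(q α (M i) : ℝ) * θ α n| :=
            Finset.abs_sum_le_sum_abs _ _
        _ ≤ ∑ i ∈ Finset.range I, (2:ℝ)⁻¹^((I - 1 - i) + k) := by
            apply Finset.sum_le_sum
            intro i hi
            rw [Finset.mem_range] at hi
            rw [abs_mul, abs_of_nonneg (by positivity : (0:ℝ) ≤ (q α (M i) : ℝ))]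
            apply term_bound hα hirr
            apply q_growth' hα hirr
            have h1 : M i + 2*(I-1-i) ≤ M (i + (I-1-i)) := hMgrow i (I-1-i)
            have he : i + (I-1-i) = I-1 := by omega
            rw [he] at h1
            have h2 : M (I-1) + K ≤ n := hsepL (I-1) (by omega)
            omega
        _ = ∑ j ∈ Finset.range I, (2:ℝ)⁻¹^(j + k) :=
            Finset.sum_range_reflect (fun j => (2:ℝ)⁻¹^(j+k)) I
        _ = (∑ j ∈ Finset.range I, (2:ℝ)⁻¹^j) * (2:ℝ)⁻¹^k := by
            rw [Finset.sum_mul]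
            exact Finset.sum_congr rfl (fun j _ => pow_add 2⁻¹ j k)
        _ ≤ 2 * (2:ℝ)⁻¹^k := by
            have h12 : ∑ j ∈ Finset.range I, (2:ℝ)⁻¹^j ≤ 2 := by
              simpa [one_div] using sum_geometric_two_le I
            have hp : (0:ℝ) ≤ 2⁻¹^k := by positivity
            nlinarith
    -- tail bound
    have htail_term : ∀ i : ℕ, (q α n : ℝ) * |θ α (M (i + I))| ≤ (2:ℝ)⁻¹^(k + i) := by
      intro i
      apply term_bound hα hirr
      apply q_growth' hα hirr
      have h1 : M I + 2*i ≤ M (I + i) := hMgrow I i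
      have he : I + i = i + I := by omega
      rw [he] at h1
      omega
    have htailsummable : Summable (fun i => (q α n : ℝ) * |θ α (M (i + I))|) := by
      have h1 : Summable (fun i => |θ α (M (i + I))|) := (summable_nat_add_iff I).mpr habs'
      exact h1.mul_left ((q α n : ℝ))
    have hgeo : Summable (fun i : ℕ => (2:ℝ)⁻¹^(k + i)) := by
      have : Summable (fun i : ℕ => (2:ℝ)⁻¹^k * (2:ℝ)⁻¹^i) :=
        (summable_geometric_of_lt_one (by norm_num) (by norm_num)).mul_left _
      apply this.congr
      intro i
      rw [← pow_add]
    have htailb : |∑' i, (q α n : ℝ) * θ α (M (i + I))| ≤ 2 * (2:ℝ)⁻¹^k := by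
      calc |∑' i, (q α n : ℝ) * θ α (M (i + I))|
          ≤ ∑' i, (q α n : ℝ) * |θ α (M (i + I))| := by
            have hns : Summable (fun i => ‖(q α n : ℝ) * θ α (M (i + I))‖) := by
              simpa [Real.norm_eq_abs] using htailsummable
            have hb := norm_tsum_le_tsum_norm hns
            simpa [Real.norm_eq_abs] using hb
        _ ≤ ∑' i, (2:ℝ)⁻¹^(k + i) := htailsummable.tsum_le_tsum htail_term hgeo
        _ = (2:ℝ)⁻¹^k * ∑' i : ℕ, (2:ℝ)⁻¹^i := by
            rw [← tsum_mul_left]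
            exact tsum_congr (fun i => pow_add 2⁻¹ k i)
        _ = 2 * (2:ℝ)⁻¹^k := by
            have h2 : ∑' i : ℕ, (2:ℝ)⁻¹^i = 2 := by
              simpa [one_div] using tsum_geometric_two
            rw [h2]
            ring
    have hRbound : |R| ≤ 8 * (2:ℝ)⁻¹^k := by
      rw [hR]
      calc |(∑ i ∈ Finset.range I, (q α (M i) : ℝ) * θ α n)
            + ∑' i, (q α n : ℝ) * θ α (M (i + I))|
          ≤ |∑ i ∈ Finset.range I, (q α (M i) : ℝ) * θ α n|
            + |∑' i, (q α n : ℝ) * θ α (M (i + I))| := abs_add_le _ _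
        _ ≤ 2 * (2:ℝ)⁻¹^k + 2 * (2:ℝ)⁻¹^k := add_le_add hheadb htailb
        _ ≤ 8 * (2:ℝ)⁻¹^k := by
            have hp : (0:ℝ) ≤ 2⁻¹^k := by positivity
            nlinarith
    calc ‖((q α n : ℤ) • (↑β : Circle1))‖ = ‖((R : ℝ) : Circle1)‖ := by rw [hcirc]
      _ ≤ |R| := norm_circle_coe_le R
      _ ≤ 8 * (2:ℝ)⁻¹^k := hRbound
      _ < ε := hk
  -- conclude via density
  have hgap' : Tendsto (fun i => M (i+1) - M i) atTop atTop := by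
    apply tendsto_atTop_mono ?_ (hgap.comp (tendsto_add_atTop_nat 1))
    intro i
    have h1 := hcons i
    have h2 := hst (i+1)
    simp only [Function.comp_apply, hMdef]
    omega
  apply densityZero_mono ?_ (densityZero_sparse M hMmono hgap' K)
  intro n hn
  simp only [Set.mem_setOf_eq] at hn ⊢
  by_contra hcon
  push_neg at hcon
  have hsep : ∀ i, M i + K ≤ n ∨ n + K ≤ M i := by
    intro i
    have := hcon i
    by_cases h : M i + K ≤ n
    · exact Or.inl h
    · right
      omega
  exact absurd hn (not_le.mpr (key n hsep))
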